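/- For all positive integers m and n, the infinite series sum over i >= 1 of 1/(L_{m(2i-1)+n} * L_{m(2i+1)+n}) converges to ((-1)^m / (5 * F_n * F_{2m})) * (L_m/L_{m+n} - 1/Φ^n), where Φ = (1+√5)/2. -/

import Mathlib

open Real Filter Finset
open scoped goldenRatio Topology

def lucas : ℕ → ℕ
  | 0 => 2
  | 1 => 1
  | n + 2 => lucas (n + 1) + lucas n

lemma lucas_pos : ∀ k, 0 < lucas k := by
  intro k
  induction k using Nat.twoStepInduction with
  | zero => decide
  | one => decide
  | more k ih ih2 => simp [lucas]; omega

lemma lucas_real : ∀ k, (lucas k : ℝ) = φ ^ k + ψ ^ k := by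
  intro k
  induction k using Nat.twoStepInduction with
  | zero => norm_num [lucas]
  | one => show ((1:ℕ):ℝ) = φ ^ 1 + ψ ^ 1; norm_num [goldenRatio_add_goldenConj]
  | more k ih ih2 =>
    have h1 : φ ^ (k+2) = φ ^ (k+1) + φ ^ k := by
      rw [show k+2 = k+1+1 from rfl, pow_succ, pow_succ]
      linear_combination (φ ^ k) * goldenRatio_sq
    have h2 : ψ ^ (k+2) = ψ ^ (k+1) + ψ ^ k := by
      rw [show k+2 = k+1+1 from rfl, pow_succ, pow_succ]
      linear_combination (ψ ^ k) * goldenConj_sq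
    simp only [lucas, Nat.cast_add, ih, ih2, h1, h2]; ring

lemma lucas_ne (k : ℕ) : ((lucas k : ℝ)) ≠ 0 :=
  (Nat.cast_pos.mpr (lucas_pos k)).ne'

lemma sqrt5_pos : (0:ℝ) < √5 := Real.sqrt_pos.mpr (by norm_num)

lemma diff_abstract (A B C D e s : ℝ) (hs : s ≠ 0) (hAB : A * B = e) :
    (A * C - B * D) / s * (A + B) - (A - B) / s * (A * C + B * D)
      = 2 * e * ((C - D) / s) := by
  field_simp
  linear_combination (2 * (C - D)) * hAB

lemma diff_id (a k : ℕ) :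
    (Nat.fib (a+k) : ℝ) * lucas a - (Nat.fib a : ℝ) * lucas (a+k)
      = 2 * (-1)^a * Nat.fib k := by
  have hAB : φ ^ a * ψ ^ a = (-1:ℝ)^a := by rw [← mul_pow, goldenRatio_mul_goldenConj]
  have h5 : (√5:ℝ) ≠ 0 := sqrt5_pos.ne'
  rw [Real.coe_fib_eq, Real.coe_fib_eq, Real.coe_fib_eq, lucas_real, lucas_real,
    pow_add, pow_add]
  exact diff_abstract _ _ _ _ _ _ h5 hAB

noncomputable def gk (k : ℕ) : ℝ := (Nat.fib k : ℝ) / (lucas k : ℝ)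

lemma term_id (a m : ℕ) (hm : 0 < m) :
    1 / ((lucas a : ℝ) * lucas (a + 2*m)) =
      ((-1:ℝ)^a / (2 * Nat.fib (2*m))) * (gk (a + 2*m) - gk a) := by
  have hF : (Nat.fib (2*m) : ℝ) ≠ 0 := by
    exact_mod_cast (Nat.fib_pos.mpr (by omega)).ne'
  have hsq : (-1:ℝ)^(a*2) = 1 := by rw [mul_comm, pow_mul]; norm_num
  have h1 : gk (a + 2*m) - gk a
      = 2 * (-1)^a * (Nat.fib (2*m) : ℝ) / ((lucas a : ℝ) * lucas (a + 2*m)) := by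
    rw [gk, gk, div_sub_div _ _ (lucas_ne _) (lucas_ne _), ← diff_id a (2*m)]
    ring
  rw [h1]
  field_simp [lucas_ne]
  ring_nf
  rw [hsq]
  ring

lemma abs_goldConj_lt_one : |ψ| < 1 :=
  abs_lt.mpr ⟨neg_one_lt_goldenConj, goldenConj_neg.trans one_pos⟩

lemma gk_abs_le (k : ℕ) : |gk k - 1/√5| ≤ (2/√5) * |ψ|^k := by
  have h5 : (√5:ℝ) ≠ 0 := sqrt5_pos.ne'
  have hL1 : (1:ℝ) ≤ (lucas k : ℝ) := by exact_mod_cast lucas_pos k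
  have hLpos : (0:ℝ) < (lucas k : ℝ) := by linarith
  have h1 : √5 * (Nat.fib k : ℝ) - (lucas k : ℝ) = -2 * ψ^k := by
    rw [Real.coe_fib_eq, lucas_real, mul_div_cancel₀ _ h5]; ring
  have h2 : gk k - 1/√5 = (√5 * (Nat.fib k : ℝ) - (lucas k : ℝ)) / (√5 * (lucas k : ℝ)) := by
    rw [gk]; field_simp
  rw [h2, h1, abs_div, abs_mul, abs_mul, abs_pow]
  have : |(-2:ℝ)| = 2 := by norm_num
  rw [this, abs_of_pos sqrt5_pos, abs_of_pos hLpos]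
  rw [div_le_iff₀ (by positivity)]
  have hpow : (0:ℝ) ≤ |ψ|^k := by positivity
  have : (2/√5) * |ψ|^k * (√5 * (lucas k : ℝ)) = 2 * |ψ|^k * (lucas k : ℝ) := by
    field_simp
  rw [this]
  nlinarith [hpow]

lemma gk_tendsto (m n : ℕ) (hm : 0 < m) (hn : 0 < n) :
    Tendsto (fun N : ℕ => gk (m*(2*N+1)+n)) atTop (𝓝 (1/√5)) := by
  have h0 : Tendsto (fun N : ℕ => gk (m*(2*N+1)+n) - 1/√5) atTop (𝓝 0) := by
    apply squeeze_zero_norm (a := fun N : ℕ => (2/√5) * |ψ|^N)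
    · intro N
      refine (gk_abs_le _).trans ?_
      have : |ψ|^(m*(2*N+1)+n) ≤ |ψ|^N := by
        apply pow_le_pow_of_le_one (abs_nonneg _) abs_goldConj_lt_one.le
        nlinarith
      have h2 : (0:ℝ) < 2/√5 := by positivity
      nlinarith
    · have := tendsto_pow_atTop_nhds_zero_of_lt_one (abs_nonneg ψ) abs_goldConj_lt_one
      simpa using this.const_mul (2/√5)
  have := h0.add (tendsto_const_nhds (x := 1/√5) (f := atTop))
  simpa using this

lemma value_abstract (A B C D e f s X : ℝ) (hs : s ≠ 0) (hs5 : s * s = 5)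
    (hCD : C * D = f) (hff : f * f = 1) (hX : X ≠ 0) (hC : C ≠ 0)
    (hCmD : C - D ≠ 0) (hL : A * C + B * D ≠ 0) :
    (e / (5 * ((C - D)/s) * X)) * ((A + B)/(A*C + B*D) - 1/C)
      = ((e * f)/(2 * X)) * (1/s - ((A*C - B*D)/s)/(A*C + B*D)) := by
  have L1 : (A + B)/(A*C + B*D) - 1/C = B*(C - D)/(C*(A*C + B*D)) := by
    field_simp; ring
  have L2 : 1/s - ((A*C - B*D)/s)/(A*C + B*D) = 2*B*D/(s*(A*C + B*D)) := by
    field_simp; ring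
  rw [L1, L2]
  field_simp
  have hL' : C * A + D * B ≠ 0 := by rw [mul_comm C A, mul_comm D B]; exact hL
  rw [div_left_inj' hL']
  linear_combination e*B*hs5 - 5*e*B*f*hCD - 5*e*B*hff

lemma value_id (m n : ℕ) (hm : 0 < m) (hn : 0 < n) :
    ((-1:ℝ)^m / (5 * (Nat.fib n : ℝ) * (Nat.fib (2*m) : ℝ))) *
      ((lucas m : ℝ)/(lucas (m+n) : ℝ) - 1/((1 + √5)/2)^n)
    = ((-1:ℝ)^(m+n) / (2 * (Nat.fib (2*m) : ℝ))) * (1/√5 - gk (m+n)) := by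
  have h5 : (√5:ℝ) ≠ 0 := sqrt5_pos.ne'
  have hs5 : √5 * √5 = 5 := Real.mul_self_sqrt (by norm_num)
  have hX : (Nat.fib (2*m) : ℝ) ≠ 0 := by
    exact_mod_cast (Nat.fib_pos.mpr (by omega)).ne'
  have hC : (φ:ℝ)^n ≠ 0 := pow_ne_zero _ goldenRatio_ne_zero
  have hCD : φ^n * ψ^n = (-1:ℝ)^n := by rw [← mul_pow, goldenRatio_mul_goldenConj]
  have hff : (-1:ℝ)^n * (-1)^n = 1 := by rw [← mul_pow]; norm_num
  have hCmD : φ^n - ψ^n ≠ 0 := by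
    have h0 : (Nat.fib n : ℝ) ≠ 0 := by exact_mod_cast (Nat.fib_pos.mpr hn).ne'
    rw [Real.coe_fib_eq] at h0
    intro h; apply h0; rw [h]; simp
  have hL : φ^m * φ^n + ψ^m * ψ^n ≠ 0 := by
    have := lucas_ne (m+n); rwa [lucas_real, pow_add, pow_add] at this
  have key := value_abstract (φ^m) (ψ^m) (φ^n) (ψ^n) ((-1:ℝ)^m) ((-1:ℝ)^n) (√5)
    (Nat.fib (2*m)) h5 hs5 hCD hff hX hC hCmD hL
  rw [gk, Real.coe_fib_eq n, Real.coe_fib_eq (m+n), lucas_real m, lucas_real (m+n)]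
  simp only [pow_add]
  exact key

lemma neg_one_pow_idx (m n i : ℕ) : (-1:ℝ)^(m*(2*i+1)+n) = (-1)^(m+n) := by
  rw [show m*(2*i+1)+n = 2*(m*i) + (m+n) by ring, pow_add, pow_mul, neg_one_sq, one_pow,
    one_mul]

theorem stmt_10 (m n : ℕ) (hm : 0 < m) (hn : 0 < n) :
    HasSum (fun i : ℕ =>
      1 / ((lucas (m * (2 * i + 1) + n) : ℝ) * (lucas (m * (2 * i + 3) + n) : ℝ)))
      (((-1 : ℝ) ^ m / (5 * (Nat.fib n : ℝ) * (Nat.fib (2 * m) : ℝ))) *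
        ((lucas m : ℝ) / (lucas (m + n) : ℝ) - 1 / ((1 + Real.sqrt 5) / 2) ^ n)) := by
  set f : ℕ → ℝ := fun i =>
    1 / ((lucas (m * (2 * i + 1) + n) : ℝ) * (lucas (m * (2 * i + 3) + n) : ℝ)) with hf
  set c : ℝ := (-1:ℝ)^(m+n) / (2 * (Nat.fib (2*m) : ℝ)) with hc
  set g : ℕ → ℝ := fun N => gk (m*(2*N+1)+n) with hg
  have hterm : ∀ i, f i = c * (g (i+1) - g i) := by
    intro i
    have hidx : m*(2*i+3)+n = (m*(2*i+1)+n) + 2*m := by ring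
    have := term_id (m*(2*i+1)+n) m hm
    rw [neg_one_pow_idx] at this
    simp only [hf, hg, hc, hidx]
    rw [this]
    congr 2
    ring_nf
  have hnonneg : ∀ i, 0 ≤ f i := by
    intro i
    have h1 : (0:ℝ) < (lucas (m * (2 * i + 1) + n) : ℝ) := by exact_mod_cast lucas_pos _
    have h2 : (0:ℝ) < (lucas (m * (2 * i + 3) + n) : ℝ) := by exact_mod_cast lucas_pos _
    positivity
  rw [hasSum_iff_tendsto_nat_of_nonneg hnonneg]
  have hps : ∀ N, ∑ i ∈ Finset.range N, f i = c * (g N - g 0) := by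
    intro N
    simp_rw [hterm, ← Finset.mul_sum, Finset.sum_range_sub]
  have hg0 : g 0 = gk (m+n) := by simp [hg]
  have hlim : Tendsto (fun N => c * (g N - g 0)) atTop (𝓝 (c * (1/√5 - g 0))) :=
    (((gk_tendsto m n hm hn).sub tendsto_const_nhds).const_mul c)
  have hval : (((-1 : ℝ) ^ m / (5 * (Nat.fib n : ℝ) * (Nat.fib (2 * m) : ℝ))) *
        ((lucas m : ℝ) / (lucas (m + n) : ℝ) - 1 / ((1 + Real.sqrt 5) / 2) ^ n))
      = c * (1/√5 - g 0) := by
    rw [hg0, hc]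
    exact value_id m n hm hn
  rw [hval]
  exact Tendsto.congr (fun N => (hps N).symm) hlim
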